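/- arXiv:2301.12137 — 3 statements merged into one kernel-verified Lean document; each statement's English description precedes it below -/
import Mathlib

section
/- For d odd, the displaced parity operator satisfies P(γ,δ) = (1/d) ∑_{α,β} D(α,β) ω_d(βγ - αδ), and conversely D(α,β) = (1/d) ∑_{γ,δ} P(γ,δ) ω_d(-βγ + αδ). -/
open Matrix

/-- `ω m a = exp(2πi a / m)` for `a : ZMod m`. -/
noncomputable def ω (m : ℕ) (a : ZMod m) : ℂ :=
  Complex.exp (2 * (Real.pi : ℂ) * Complex.I * (a.val : ℂ) / (m : ℂ))

/-- The finite Fourier transform matrix `F_{jk} = ω_d(jk)/√d`. -/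
noncomputable def Fmat (d : ℕ) [NeZero d] : Matrix (ZMod d) (ZMod d) ℂ :=
  fun j k => (1 / (Real.sqrt d : ℂ)) * ω d (j * k)


/-- The cyclic shift operator: `X^β |X;j⟩ = |X;j+β⟩`. -/
def Xmat (d : ℕ) [NeZero d] (β : ZMod d) : Matrix (ZMod d) (ZMod d) ℂ :=
  fun j k => if j = k + β then 1 else 0

/-- The diagonal clock operator: `Z^α |X;j⟩ = ω_d(αj)|X;j⟩`. -/
noncomputable def Zmat (d : ℕ) [NeZero d] (α : ZMod d) : Matrix (ZMod d) (ZMod d) ℂ :=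
  Matrix.diagonal (fun j => ω d (α * j))


/-- The displacement operator `D(α,β) = Z^α X^β ω_d(-2⁻¹αβ)`. -/
noncomputable def Dmat (d : ℕ) [NeZero d] (α β : ZMod d) : Matrix (ZMod d) (ZMod d) ℂ :=
  ω d (-((2 : ZMod d)⁻¹ * α * β)) • (Zmat d α * Xmat d β)


/-- The displaced parity operator `P(γ,δ) = D(γ,δ) F² D(γ,δ)†`. -/
noncomputable def Pmat (d : ℕ) [NeZero d] (γ δ : ZMod d) : Matrix (ZMod d) (ZMod d) ℂ :=
  Dmat d γ δ * (Fmat d) ^ 2 * (Dmat d γ δ)ᴴ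

noncomputable def zet (d : ℕ) : ℂ := Complex.exp (2 * Real.pi * Complex.I / d)

lemma hzet (d : ℕ) [NeZero d] : IsPrimitiveRoot (zet d) d :=
  Complex.isPrimitiveRoot_exp d (NeZero.ne d)

lemma omega_eq (d : ℕ) [NeZero d] (a : ZMod d) : ω d a = zet d ^ a.val := by
  rw [ω, zet, ← Complex.exp_nat_mul]
  congr 1
  ring

lemma omega_add (d : ℕ) [NeZero d] (a b : ZMod d) : ω d (a + b) = ω d a * ω d b := by
  rw [omega_eq, omega_eq, omega_eq, ← pow_add, ZMod.val_add,
    ← pow_eq_pow_mod _ ((hzet d).pow_eq_one)]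

lemma omega_zero (d : ℕ) [NeZero d] : ω d 0 = 1 := by
  simp [ω]

lemma omega_ne_zero (d : ℕ) [NeZero d] (a : ZMod d) : ω d a ≠ 0 := by
  rw [ω]; exact Complex.exp_ne_zero _

lemma omega_neg (d : ℕ) [NeZero d] (a : ZMod d) : ω d (-a) = (ω d a)⁻¹ := by
  have h : ω d a * ω d (-a) = 1 := by
    rw [← omega_add]; simp [omega_zero]
  field_simp [omega_ne_zero] at h ⊢
  linear_combination h

lemma omega_conj (d : ℕ) [NeZero d] (a : ZMod d) : (starRingEnd ℂ) (ω d a) = ω d (-a) := by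
  rw [omega_neg, ω, ← Complex.exp_conj, ← Complex.exp_neg]
  congr 1
  simp only [map_div₀, _root_.map_mul, Complex.conj_I, map_ofNat, Complex.conj_natCast,
    Complex.conj_ofReal]
  ring

lemma omega_eq_one (d : ℕ) [NeZero d] (a : ZMod d) : ω d a = 1 ↔ a = 0 := by
  rw [omega_eq, (hzet d).pow_eq_one_iff_dvd]
  constructor
  · intro h
    have := Nat.eq_zero_of_dvd_of_lt h
    rcases Nat.eq_zero_or_pos a.val with h0 | hp
    · exact (ZMod.val_eq_zero a).mp h0
    · exact absurd (Nat.le_of_dvd hp h) (Nat.not_le.mpr (ZMod.val_lt a))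
  · rintro rfl; simp

lemma sum_omega (d : ℕ) [NeZero d] (c : ZMod d) :
    ∑ a : ZMod d, ω d (a * c) = if c = 0 then (d : ℂ) else 0 := by
  split_ifs with hc
  · subst hc; simp [omega_zero, ZMod.card]
  · have hshift : ∑ a : ZMod d, ω d ((a + 1) * c) = ∑ a : ZMod d, ω d (a * c) :=
      Fintype.sum_equiv (Equiv.addRight 1) _ _ (fun a => rfl)
    have h2 : ∀ a : ZMod d, ω d ((a + 1) * c) = ω d (a * c) * ω d c := by
      intro a; rw [← omega_add]; ring_nf
    simp_rw [h2, ← Finset.sum_mul] at hshift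
    have hne : ω d c ≠ 1 := fun h => hc ((omega_eq_one d c).mp h)
    have : (∑ a : ZMod d, ω d (a * c)) * (ω d c - 1) = 0 := by
      rw [mul_sub, mul_one, hshift, sub_self]
    rcases mul_eq_zero.mp this with h | h
    · exact h
    · exact absurd (by linear_combination h) hne

lemma Dmat_apply (d : ℕ) [NeZero d] (α β j k : ZMod d) :
    Dmat d α β j k = if j = k + β then ω d (-((2 : ZMod d)⁻¹ * α * β) + α * j) else 0 := by
  simp [Dmat, Zmat, Xmat, Matrix.mul_apply, Matrix.diagonal, omega_add, mul_comm]

lemma Fsq_apply (d : ℕ) [NeZero d] (j k : ZMod d) :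
    ((Fmat d) ^ 2) j k = if j + k = 0 then 1 else 0 := by
  have hd0 : (d : ℂ) ≠ 0 := Nat.cast_ne_zero.mpr (NeZero.ne d)
  have hs : ((Real.sqrt d : ℂ)) * ((Real.sqrt d : ℂ)) = (d : ℂ) := by
    rw [← Complex.ofReal_mul, Real.mul_self_sqrt (Nat.cast_nonneg d)]
    simp
  rw [sq, Matrix.mul_apply]
  simp only [Fmat]
  have key : ∑ m : ZMod d, (1 / (Real.sqrt d : ℂ)) * ω d (j * m) *
      ((1 / (Real.sqrt d : ℂ)) * ω d (m * k)) =
      (1 / (d:ℂ)) * ∑ m : ZMod d, ω d (m * (j + k)) := by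
    rw [Finset.mul_sum]
    refine Finset.sum_congr rfl fun m _ => ?_
    have h1 : ω d (j * m) * ω d (m * k) = ω d (m * (j + k)) := by
      rw [← omega_add]; congr 1; ring
    rw [mul_mul_mul_comm, div_mul_div_comm, one_mul, hs, h1]
  rw [key]
  rw [sum_omega]
  split_ifs with h
  · field_simp
  · simp

lemma DF2_apply (d : ℕ) [NeZero d] (γ δ j n : ZMod d) :
    (Dmat d γ δ * (Fmat d) ^ 2) j n =
      if j + n = δ then ω d (-((2 : ZMod d)⁻¹ * γ * δ) + γ * j) else 0 := by
  rw [Matrix.mul_apply]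
  simp only [Dmat_apply, Fsq_apply]
  have hcond : ∀ m : ZMod d, (j = m + δ) = (m = j - δ) := by
    intro m
    simp only [eq_iff_iff]
    constructor
    · intro h; rw [h]; ring
    · intro h; rw [h]; ring
  simp_rw [hcond, ite_mul, zero_mul]
  rw [Finset.sum_ite_eq' Finset.univ (j - δ)]
  simp only [Finset.mem_univ, if_true]
  have : (j - δ + n = 0) = (j + n = δ) := by
    simp only [eq_iff_iff]
    constructor
    · intro h; linear_combination h
    · intro h; linear_combination h
  simp only [this]
  split_ifs <;> simp

lemma Pmat_apply (d : ℕ) [NeZero d] (γ δ j k : ZMod d) :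
    Pmat d γ δ j k = if j + k = 2 * δ then ω d (γ * (j - k)) else 0 := by
  rw [Pmat, Matrix.mul_apply]
  simp only [DF2_apply, Matrix.conjTranspose_apply, Dmat_apply, RCLike.star_def]
  have hconj : ∀ n : ZMod d, (starRingEnd ℂ) (if k = n + δ then
      ω d (-((2 : ZMod d)⁻¹ * γ * δ) + γ * k) else 0) =
      if n = k - δ then ω d ((2 : ZMod d)⁻¹ * γ * δ - γ * k) else 0 := by
    intro n
    have hc : (k = n + δ) = (n = k - δ) := by
      simp only [eq_iff_iff]
      constructor
      · intro h; rw [h]; ring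
      · intro h; rw [h]; ring
    by_cases hkn : k = n + δ
    · have hn : n = k - δ := by rw [hkn]; ring
      rw [if_pos hkn, if_pos hn, omega_conj]
      congr 1; ring
    · have hn : ¬ n = k - δ := fun h => hkn (by rw [h]; ring)
      rw [if_neg hkn, if_neg hn, map_zero]
  simp_rw [hconj]
  have hcomb : ∀ n : ZMod d,
      (if j + n = δ then ω d (-((2 : ZMod d)⁻¹ * γ * δ) + γ * j) else 0) *
        (if n = k - δ then ω d ((2 : ZMod d)⁻¹ * γ * δ - γ * k) else 0) =
      if n = k - δ then (if j + n = δ then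
        ω d (-((2 : ZMod d)⁻¹ * γ * δ) + γ * j) * ω d ((2 : ZMod d)⁻¹ * γ * δ - γ * k)
        else 0) else 0 := by
    intro n
    split_ifs <;> simp
  simp_rw [hcomb]
  rw [Finset.sum_ite_eq' Finset.univ (k - δ)]
  simp only [Finset.mem_univ, if_true]
  have hc2 : (j + (k - δ) = δ) ↔ (j + k = 2 * δ) := by
    constructor
    · intro h; linear_combination h
    · intro h; linear_combination h
  by_cases h : j + k = 2 * δ
  · rw [if_pos (hc2.mpr h), if_pos h, ← omega_add]
    congr 1; ring
  · rw [if_neg (fun hh => h (hc2.mp hh)), if_neg h]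

/-- The displaced parity operator and displacement operators are Fourier transforms
of each other. -/
theorem stmt7 (d : ℕ) [NeZero d] (hd : Odd d) :
    (∀ γ δ : ZMod d, Pmat d γ δ =
      (1 / (d : ℂ)) • ∑ α : ZMod d, ∑ β : ZMod d, ω d (β * γ - α * δ) • Dmat d α β) ∧
    (∀ α β : ZMod d, Dmat d α β =
      (1 / (d : ℂ)) • ∑ γ : ZMod d, ∑ δ : ZMod d, ω d (-(β * γ) + α * δ) • Pmat d γ δ) := by
  have h2 : (2 : ZMod d) * (2 : ZMod d)⁻¹ = 1 := by
    apply ZMod.mul_inv_of_unit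
    have h22 : ((2 : ℕ) : ZMod d) = (2 : ZMod d) := by norm_cast
    rw [← h22, ZMod.isUnit_iff_coprime]
    exact Nat.coprime_two_left.mpr hd
  have hd0 : (d : ℂ) ≠ 0 := Nat.cast_ne_zero.mpr (NeZero.ne d)
  constructor
  · intro γ δ
    ext j k
    rw [Pmat_apply]
    simp only [Matrix.smul_apply, Matrix.sum_apply, smul_eq_mul, Dmat_apply]
    have step1 : ∀ α β : ZMod d,
        ω d (β * γ - α * δ) * (if j = k + β then ω d (-((2:ZMod d)⁻¹ * α * β) + α * j) else 0) =
        if β = j - k then ω d ((j - k) * γ) *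
          ω d (α * (j - δ - (2:ZMod d)⁻¹ * (j - k))) else 0 := by
      intro α β
      by_cases hb : β = j - k
      · subst hb
        rw [if_pos (show j = k + (j - k) by ring), if_pos rfl, ← omega_add, ← omega_add]
        congr 1; ring
      · rw [if_neg (fun h => hb (by rw [h]; ring)), if_neg hb, mul_zero]
    simp_rw [step1, Finset.sum_ite_eq' Finset.univ (j - k), Finset.mem_univ, if_true,
      ← Finset.mul_sum, sum_omega]
    have hcc : (j - δ - (2:ZMod d)⁻¹ * (j - k) = 0) ↔ (j + k = 2 * δ) := by
      constructor
      · intro h; linear_combination 2 * h + (j - k) * h2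
      · intro h; linear_combination (2:ZMod d)⁻¹ * h + (δ - j) * h2
    by_cases hjk : j + k = 2 * δ
    · rw [if_pos hjk, if_pos (hcc.mpr hjk)]
      have : ω d ((j - k) * γ) = ω d (γ * (j - k)) := by congr 1; ring
      rw [this]
      field_simp
    · rw [if_neg hjk, if_neg (fun h => hjk (hcc.mp h)), mul_zero, mul_zero]
  · intro α β
    ext j k
    rw [Dmat_apply]
    simp only [Matrix.smul_apply, Matrix.sum_apply, smul_eq_mul, Pmat_apply]
    have step1 : ∀ γ δ' : ZMod d,
        ω d (-(β * γ) + α * δ') * (if j + k = 2 * δ' then ω d (γ * (j - k)) else 0) =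
        if δ' = (2:ZMod d)⁻¹ * (j + k) then
          ω d (α * ((2:ZMod d)⁻¹ * (j + k))) * ω d (γ * (j - k - β)) else 0 := by
      intro γ δ'
      by_cases hδ : δ' = (2:ZMod d)⁻¹ * (j + k)
      · subst hδ
        rw [if_pos (show j + k = 2 * ((2:ZMod d)⁻¹ * (j + k)) by
            linear_combination (-(j + k)) * h2), if_pos rfl, ← omega_add, ← omega_add]
        congr 1; ring
      · rw [if_neg (fun h => hδ (by linear_combination -(2:ZMod d)⁻¹ * h - δ' * h2)),
          if_neg hδ, mul_zero]
    simp_rw [step1, Finset.sum_ite_eq' Finset.univ ((2:ZMod d)⁻¹ * (j + k)),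
      Finset.mem_univ, if_true]
    have step2 : ∀ γ : ZMod d,
        ω d (α * ((2:ZMod d)⁻¹ * (j + k))) * ω d (γ * (j - k - β)) =
        ω d (α * ((2:ZMod d)⁻¹ * (j + k))) * ω d (γ * (j - k - β)) := fun _ => rfl
    rw [← Finset.mul_sum, sum_omega]
    have hcc : (j - k - β = 0) ↔ (j = k + β) := by
      constructor
      · intro h; linear_combination h
      · intro h; linear_combination h
    by_cases hj : j = k + β
    · rw [if_pos hj, if_pos (hcc.mpr hj)]
      have : ω d (-((2:ZMod d)⁻¹ * α * β) + α * j) = ω d (α * ((2:ZMod d)⁻¹ * (j + k))) := by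
        congr 1; linear_combination (2:ZMod d)⁻¹ * α * hj - α * j * h2
      rw [this]
      field_simp
    · rw [if_neg hj, if_neg (fun h => hj (hcc.mp h)), mul_zero, mul_zero]
end

section
/- For d odd and n ≥ 1, the global Fourier transform F_G on C^{d^n}, defined via F_G|X;ĵ⟩ = (1/√(d^n))∑_k̂ ω_{d^n}(ĵk̂)|X;k̂⟩, satisfies F_G² = F_L², where F_L = F⊗...⊗F is the n-fold tensor of the d-dimensional Fourier transform and the tensor basis is identified with Z/(d^n)Z via (j₀,...,j_{n-1}) ↦ j₀+j₁d+...+j_{n-1}d^{n-1} using symmetric representatives. -/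
open Matrix

/-- The symmetric-interval representative of `x : ZMod d`, lying in `[-(d-1)/2, (d-1)/2]`
for odd `d`. -/
def valMin (d : ℕ) (x : ZMod d) : ℤ :=
  if (x.val : ℤ) ≤ ((d : ℤ) - 1) / 2 then (x.val : ℤ) else (x.val : ℤ) - d

/-- The map `(j₀,...,j_{n-1}) ↦ j₀ + j₁ d + ... + j_{n-1} d^{n-1} (mod dⁿ)`,
using symmetric representatives. -/
def encMap (d n : ℕ) [NeZero d] (j : Fin n → ZMod d) : ZMod (d ^ n) :=
  ((∑ r : Fin n, valMin d (j r) * (d : ℤ) ^ (r : ℕ) : ℤ) : ZMod (d ^ n))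

/-- The local Fourier transform `F_L = F ⊗ ... ⊗ F` on the n-fold tensor basis. -/
noncomputable def FLmat (d n : ℕ) [NeZero d] :
    Matrix (Fin n → ZMod d) (Fin n → ZMod d) ℂ :=
  fun j k => ∏ r : Fin n, Fmat d (j r) (k r)

lemma omega_pow (m : ℕ) [NeZero m] (x : ZMod m) :
    ω m x = Complex.exp (2 * (Real.pi : ℂ) * Complex.I / m) ^ x.val := by
  rw [ω, ← Complex.exp_nat_mul]
  ring_nf

lemma zmod_sum_val {m : ℕ} [NeZero m] (f : ℕ → ℂ) :
    ∑ c : ZMod m, f c.val = ∑ i ∈ Finset.range m, f i := by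
  refine Finset.sum_nbij' (fun c => c.val) (fun i => (i : ZMod m)) ?_ ?_ ?_ ?_ ?_
  · intro a _; exact Finset.mem_range.mpr a.val_lt
  · intro a _; exact Finset.mem_univ _
  · intro a _; exact ZMod.natCast_zmod_val a
  · intro a ha; exact ZMod.val_cast_of_lt (Finset.mem_range.mp ha)
  · intro a _; rfl

lemma Fsq (m : ℕ) [NeZero m] (a b : ZMod m) :
    (Fmat m * Fmat m) a b = if a + b = 0 then 1 else 0 := by
  have hm0 : (m : ℕ) ≠ 0 := NeZero.ne m
  have hmC : (m : ℂ) ≠ 0 := Nat.cast_ne_zero.mpr hm0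
  set ζ : ℂ := Complex.exp (2 * (Real.pi : ℂ) * Complex.I / m) with hζdef
  have hζ : IsPrimitiveRoot ζ m := Complex.isPrimitiveRoot_exp m hm0
  have hord : orderOf ζ = m := hζ.eq_orderOf.symm
  have hζm : ζ ^ m = 1 := hζ.pow_eq_one
  have hdvd : m ∣ a.val + b.val ↔ a + b = 0 := by
    rw [← ZMod.natCast_eq_zero_iff, Nat.cast_add,
      ZMod.natCast_zmod_val, ZMod.natCast_zmod_val]
  have key : ∀ c : ZMod m, ω m (a * c) * ω m (c * b) = (ζ ^ (a.val + b.val)) ^ c.val := by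
    intro c
    have hpm : ∀ i : ℕ, ζ ^ i = ζ ^ (i % m) := by
      intro i
      conv_lhs => rw [← Nat.div_add_mod i m]
      rw [pow_add, pow_mul, hζm, one_pow, one_mul]
    rw [omega_pow, omega_pow, ← hζdef, ← pow_add, ← pow_mul, hpm, hpm ((a.val + b.val) * c.val)]
    congr 1
    have : (a * c).val + (c * b).val ≡ (a.val + b.val) * c.val [MOD m] := by
      calc (a * c).val + (c * b).val
          ≡ a.val * c.val + c.val * b.val [MOD m] := by
            exact Nat.ModEq.add (by rw [ZMod.val_mul]; exact Nat.mod_modEq _ m)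
              (by rw [ZMod.val_mul]; exact Nat.mod_modEq _ m)
        _ = (a.val + b.val) * c.val := by ring
    exact this
  have hsq : ((Real.sqrt m : ℂ))⁻¹ ^ 2 * m = 1 := by
    have h1 : ((Real.sqrt m : ℂ)) ^ 2 = m := by
      rw [← Complex.ofReal_pow, Real.sq_sqrt (Nat.cast_nonneg m)]
      norm_cast
    rw [inv_pow, h1, inv_mul_cancel₀ hmC]
  rw [Matrix.mul_apply]
  simp only [Fmat, one_div]
  have step : ∀ c : ZMod m,
      (Real.sqrt m : ℂ)⁻¹ * ω m (a * c) * ((Real.sqrt m : ℂ)⁻¹ * ω m (c * b))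
        = (Real.sqrt m : ℂ)⁻¹ ^ 2 * (ζ ^ (a.val + b.val)) ^ c.val := by
    intro c; rw [← key c]; ring
  rw [Finset.sum_congr rfl fun c _ => step c, ← Finset.mul_sum]
  rw [zmod_sum_val (f := fun i => (ζ ^ (a.val + b.val)) ^ i)]
  by_cases hab : a + b = 0
  · have : ζ ^ (a.val + b.val) = 1 := by
      obtain ⟨t, ht⟩ := hdvd.mpr hab
      rw [ht, pow_mul, hζm, one_pow]
    rw [if_pos hab]
    simp only [this, one_pow, Finset.sum_const, Finset.card_range, nsmul_eq_mul, mul_one]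
    rw [mul_comm] at hsq
    rw [← hsq]; ring
  · have hne : ζ ^ (a.val + b.val) ≠ 1 := by
      intro h
      exact hab (hdvd.mp ((hζ.pow_eq_one_iff_dvd _).mp h))
    rw [geom_sum_eq hne]
    have : (ζ ^ (a.val + b.val)) ^ m = 1 := by
      rw [← pow_mul, mul_comm, pow_mul, hζm, one_pow]
    simp [hab, this]

lemma valMin_eq_valMinAbs (d : ℕ) [NeZero d] (hd : Odd d) (x : ZMod d) :
    valMin d x = x.valMinAbs := by
  obtain ⟨t, ht⟩ := hd
  rw [valMin, ZMod.valMinAbs_def_pos]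
  have : ((x.val : ℤ) ≤ ((d : ℤ) - 1) / 2) ↔ (x.val ≤ d / 2) := by
    omega
  simp only [this]

lemma valMin_cast (d : ℕ) [NeZero d] (hd : Odd d) (x : ZMod d) :
    ((valMin d x : ℤ) : ZMod d) = x := by
  rw [valMin_eq_valMinAbs d hd, ZMod.coe_valMinAbs]

lemma valMin_abs_le (d : ℕ) [NeZero d] (hd : Odd d) (x : ZMod d) :
    2 * |valMin d x| ≤ (d : ℤ) - 1 := by
  obtain ⟨t, ht⟩ := hd
  have h := ZMod.natAbs_valMinAbs_le x
  rw [valMin_eq_valMinAbs d ⟨t, ht⟩]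
  have := Int.abs_eq_natAbs x.valMinAbs
  omega

lemma valMin_neg (d : ℕ) [NeZero d] (hd : Odd d) (x : ZMod d) :
    valMin d (-x) = -valMin d x := by
  rw [valMin_eq_valMinAbs d hd, valMin_eq_valMinAbs d hd]
  refine ZMod.valMinAbs_neg_of_ne_half ?_
  obtain ⟨t, ht⟩ := hd
  omega

lemma digits_zero (d : ℕ) (hd : 1 ≤ d) :
    ∀ (n : ℕ) (c : ℕ → ℤ), (∀ r, 2 * |c r| ≤ 2 * ((d : ℤ) - 1)) →
      (∑ r ∈ Finset.range n, c r * (d : ℤ) ^ r = 0) → ∀ r < n, c r = 0 := by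
  intro n
  induction n with
  | zero => intro c _ _ r hr; omega
  | succ n ih =>
    intro c hb hs r hr
    rw [Finset.sum_range_succ'] at hs
    have h0 : ∑ i ∈ Finset.range n, c (i + 1) * (d : ℤ) ^ (i + 1)
        = (d : ℤ) * ∑ i ∈ Finset.range n, c (i + 1) * (d : ℤ) ^ i := by
      rw [Finset.mul_sum]
      refine Finset.sum_congr rfl fun i _ => by ring
    rw [h0] at hs
    have hdvd : (d : ℤ) ∣ c 0 := by
      have : c 0 = -((d:ℤ) * ∑ i ∈ Finset.range n, c (i + 1) * (d : ℤ) ^ i) := by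
        simp only [pow_zero, mul_one] at hs; omega
      exact ⟨-(∑ i ∈ Finset.range n, c (i + 1) * (d : ℤ) ^ i), by rw [this]; ring⟩
    have hc0 : c 0 = 0 := by
      obtain ⟨q, hq⟩ := hdvd
      have habs : |c 0| ≤ (d : ℤ) - 1 := by have := hb 0; omega
      have h1 := abs_le.mp habs
      have hd0 : (1 : ℤ) ≤ d := by exact_mod_cast hd
      rcases lt_trichotomy q 0 with h | h | h
      · have : c 0 ≤ -(d : ℤ) := by nlinarith
        linarith [h1.1]
      · rw [hq, h, mul_zero]
      · have : (d : ℤ) ≤ c 0 := by nlinarith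
        linarith [h1.2]
    have hrest : ∑ i ∈ Finset.range n, c (i + 1) * (d : ℤ) ^ i = 0 := by
      have hd0 : (d : ℤ) ≠ 0 := by omega
      have : (d : ℤ) * ∑ i ∈ Finset.range n, c (i + 1) * (d : ℤ) ^ i = 0 := by
        simp only [pow_zero, mul_one] at hs; omega
      exact (mul_eq_zero.mp this).resolve_left hd0
    rcases r with _ | s
    · exact hc0
    · exact ih (fun i => c (i + 1)) (fun i => hb (i + 1)) hrest s (by omega)

lemma sum_bound (d n : ℕ) (hd : 1 ≤ d) (c : ℕ → ℤ)
    (h : ∀ r, 2 * |c r| ≤ 2 * ((d : ℤ) - 1)) :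
    |∑ r ∈ Finset.range n, c r * (d : ℤ) ^ r| ≤ (d : ℤ) ^ n - 1 := by
  calc |∑ r ∈ Finset.range n, c r * (d : ℤ) ^ r|
      ≤ ∑ r ∈ Finset.range n, |c r * (d : ℤ) ^ r| := Finset.abs_sum_le_sum_abs _ _
    _ ≤ ∑ r ∈ Finset.range n, ((d : ℤ) - 1) * (d : ℤ) ^ r := by
        refine Finset.sum_le_sum fun r _ => ?_
        rw [abs_mul, abs_pow]
        have hdp : |(d : ℤ)| = (d : ℤ) := abs_of_nonneg (by positivity)
        rw [hdp]
        have : |c r| ≤ (d : ℤ) - 1 := by have := h r; omega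
        exact mul_le_mul_of_nonneg_right this (by positivity)
    _ = (d : ℤ) ^ n - 1 := by
        rw [← Finset.mul_sum, mul_comm, geom_sum_mul]

lemma enc_iff (d n : ℕ) [NeZero d] [NeZero (d ^ n)] (hd : Odd d)
    (j k : Fin n → ZMod d) :
    encMap d n j + encMap d n k = 0 ↔ ∀ r, j r + k r = 0 := by
  have hd1 : 1 ≤ d := Nat.one_le_iff_ne_zero.mpr (NeZero.ne d)
  set c : ℕ → ℤ := fun r =>
    if h : r < n then valMin d (j ⟨r, h⟩) + valMin d (k ⟨r, h⟩) else 0 with hc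
  have hb : ∀ r, 2 * |c r| ≤ 2 * ((d : ℤ) - 1) := by
    intro r
    by_cases h : r < n
    · have h1 := valMin_abs_le d hd (j ⟨r, h⟩)
      have h2 := valMin_abs_le d hd (k ⟨r, h⟩)
      have := abs_add_le (valMin d (j ⟨r, h⟩)) (valMin d (k ⟨r, h⟩))
      simp only [hc, dif_pos h]
      omega
    · simp only [hc, dif_neg h, abs_zero]
      omega
  have hS : encMap d n j + encMap d n k
      = ((∑ r ∈ Finset.range n, c r * (d : ℤ) ^ r : ℤ) : ZMod (d ^ n)) := by
    rw [encMap, encMap, ← Int.cast_add, ← Finset.sum_add_distrib]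
    congr 1
    rw [← Fin.sum_univ_eq_sum_range (fun r => c r * (d : ℤ) ^ r) n]
    refine Finset.sum_congr rfl fun r _ => by
      simp only [hc, dif_pos r.isLt, Fin.eta]; ring
  constructor
  · intro h
    have hdvd : ((d : ℤ) ^ n) ∣ ∑ r ∈ Finset.range n, c r * (d : ℤ) ^ r := by
      rw [hS] at h
      have := (ZMod.intCast_zmod_eq_zero_iff_dvd _ (d ^ n)).mp h
      exact_mod_cast this
    have hzero : ∑ r ∈ Finset.range n, c r * (d : ℤ) ^ r = 0 := by
      have hbd := sum_bound d n hd1 c hb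
      have hpos : (0 : ℤ) < (d : ℤ) ^ n := by positivity
      rcases hdvd with ⟨q, hq⟩
      rcases lt_trichotomy q 0 with hq0 | hq0 | hq0
      · have : ∑ r ∈ Finset.range n, c r * (d : ℤ) ^ r ≤ -((d : ℤ) ^ n) := by nlinarith
        have := abs_le.mp hbd
        linarith [this.1]
      · rw [hq, hq0, mul_zero]
      · have : ((d : ℤ) ^ n) ≤ ∑ r ∈ Finset.range n, c r * (d : ℤ) ^ r := by nlinarith
        have h2 := abs_le.mp hbd
        linarith [h2.2]
    intro r
    have := digits_zero d hd1 n c hb hzero r.val r.isLt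
    simp only [hc, dif_pos r.isLt, Fin.eta] at this
    have hcast := congrArg (fun z : ℤ => (z : ZMod d)) this
    simpa [valMin_cast d hd] using hcast
  · intro h
    rw [hS]
    have hz : ∀ r ∈ Finset.range n, c r * (d : ℤ) ^ r = 0 := by
      intro r hr
      have hrn : r < n := Finset.mem_range.mp hr
      have hk : k ⟨r, hrn⟩ = -(j ⟨r, hrn⟩) :=
        eq_neg_of_add_eq_zero_right (h ⟨r, hrn⟩)
      simp only [hc, dif_pos hrn, hk, valMin_neg d hd]
      ring
    rw [Finset.sum_eq_zero hz, Int.cast_zero]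

lemma FLsq (d n : ℕ) [NeZero d] (j k : Fin n → ZMod d) :
    (FLmat d n * FLmat d n) j k = ∏ r, (Fmat d * Fmat d) (j r) (k r) := by
  simp only [Matrix.mul_apply, FLmat]
  simp only [← Finset.prod_mul_distrib]
  rw [Finset.prod_univ_sum (fun _ : Fin n => (Finset.univ : Finset (ZMod d)))
    (fun r y => Fmat d (j r) y * Fmat d y (k r))]
  simp


/-- `F_G² = F_L²` under the symmetric-representative identification of the bases. -/
theorem stmt10 (d n : ℕ) [NeZero d] [NeZero (d ^ n)] (hd : Odd d) (hn : 1 ≤ n) :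
    ∀ j k : Fin n → ZMod d,
      (FLmat d n * FLmat d n) j k =
        (Fmat (d ^ n) * Fmat (d ^ n)) (encMap d n j) (encMap d n k) := by
  intro j k
  rw [FLsq, Fsq]
  have : ∀ r : Fin n, (Fmat d * Fmat d) (j r) (k r) = if j r + k r = 0 then 1 else 0 :=
    fun r => Fsq d (j r) (k r)
  simp only [this]
  rw [Fintype.prod_boole]
  by_cases h : ∀ i, j i + k i = 0
  · rw [if_pos h, if_pos ((enc_iff d n hd j k).mpr h)]
  · rw [if_neg h, if_neg (fun hc => h ((enc_iff d n hd j k).mp hc))]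
end

section
/- For d odd and n ≥ 1, the global momentum state |P_G; d^{n-1}⟩ = F_G|X; d^{n-1}⟩ equals the local momentum state |P_L; 1,0,...,0⟩ = F_L|X;1,0,...,0⟩, i.e., ⟨P_L;1,0,...,0|P_G; d^{n-1}⟩ = 1. -/
open Matrix

lemma valMin_sub_val_dvd (d : ℕ) (y : ZMod d) : (d : ℤ) ∣ valMin d y - (y.val : ℤ) := by
  unfold valMin
  split
  · simp
  · simp [sub_sub_cancel_left, dvd_neg]

lemma sqrt_pow_aux (d n : ℕ) : (Real.sqrt d) ^ n = Real.sqrt ((d : ℝ) ^ n) := by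
  induction n with
  | zero => simp
  | succ k ih =>
    rw [pow_succ, pow_succ, ih, ← Real.sqrt_mul (by positivity)]

/-- The global momentum state `|P_G; d^{n-1}⟩` equals the local momentum state
`|P_L; 1,0,...,0⟩`. -/
theorem stmt11 (d n : ℕ) [NeZero d] [NeZero (d ^ n)] (hd : Odd d) (hn : 1 ≤ n) :
    ∀ x : Fin n → ZMod d,
      (Fmat (d ^ n)).mulVec
          (Pi.single ((d : ZMod (d ^ n)) ^ (n - 1)) 1 : ZMod (d ^ n) → ℂ)
          (encMap d n x) =
        (FLmat d n).mulVec
          (Pi.single (fun r : Fin n => if (r : ℕ) = 0 then 1 else 0) 1 :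
            (Fin n → ZMod d) → ℂ) x := by
  intro x
  classical
  have hd0 : (d : ℕ) ≠ 0 := NeZero.ne d
  set r0 : Fin n := ⟨0, hn⟩ with hr0
  set v : ℕ := (x r0).val with hv
  have hvlt : v < d := ZMod.val_lt (x r0)
  simp only [Matrix.mulVec_single, mul_one]
  -- Step 1: the ZMod (d^n) index equality
  have hA : encMap d n x * (d : ZMod (d ^ n)) ^ (n - 1)
      = ((v * d ^ (n - 1) : ℕ) : ZMod (d ^ n)) := by
    have hcast : (d : ZMod (d ^ n)) ^ (n - 1) = (((d : ℤ) ^ (n - 1) : ℤ) : ZMod (d ^ n)) := by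
      push_cast; ring
    rw [encMap, hcast, ← Int.cast_mul]
    have : ((v * d ^ (n - 1) : ℕ) : ZMod (d ^ n))
        = (((v : ℤ) * (d : ℤ) ^ (n - 1) : ℤ) : ZMod (d ^ n)) := by push_cast; ring
    rw [this, ZMod.intCast_eq_intCast_iff, Int.modEq_iff_dvd]
    -- ⊢ (d^n : ℤ) ∣ v * d^(n-1) - (∑ r, valMin d (x r) * d^r) * d^(n-1)
    have hsplit : (∑ r : Fin n, valMin d (x r) * (d : ℤ) ^ (r : ℕ)) * (d : ℤ) ^ (n - 1)
        = valMin d (x r0) * (d : ℤ) ^ (n - 1)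
          + ∑ r ∈ Finset.univ.erase r0,
              valMin d (x r) * (d : ℤ) ^ (r : ℕ) * (d : ℤ) ^ (n - 1) := by
      rw [Finset.sum_mul, ← Finset.add_sum_erase _ _ (Finset.mem_univ r0)]
      simp [hr0]
    rw [hsplit]
    have h1 : ((d : ℤ) ^ n) ∣ (v : ℤ) * (d : ℤ) ^ (n - 1) - valMin d (x r0) * (d : ℤ) ^ (n - 1) := by
      have : (v : ℤ) * (d : ℤ) ^ (n - 1) - valMin d (x r0) * (d : ℤ) ^ (n - 1)
          = ((v : ℤ) - valMin d (x r0)) * (d : ℤ) ^ (n - 1) := by ring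
      rw [this]
      have hdvd : (d : ℤ) ∣ (v : ℤ) - valMin d (x r0) := by
        have h := valMin_sub_val_dvd d (x r0)
        rw [← hv] at h
        exact dvd_sub_comm.mp h
      have hpow : ((d : ℤ) ^ n) = (d : ℤ) * (d : ℤ) ^ (n - 1) := by
        rw [← pow_succ']
        congr 1
        omega
      rw [hpow]
      exact mul_dvd_mul hdvd dvd_rfl
    have h2 : ((d : ℤ) ^ n) ∣ ∑ r ∈ Finset.univ.erase r0,
        valMin d (x r) * (d : ℤ) ^ (r : ℕ) * (d : ℤ) ^ (n - 1) := by
      refine Finset.dvd_sum fun r hr => ?_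
      have hr1 : 1 ≤ (r : ℕ) := by
        rcases Finset.mem_erase.mp hr with ⟨hne, -⟩
        have hne' : (r : ℕ) ≠ (r0 : ℕ) := fun h' => hne (Fin.ext h')
        have hz : (r0 : ℕ) = 0 := rfl
        omega
      have : valMin d (x r) * (d : ℤ) ^ (r : ℕ) * (d : ℤ) ^ (n - 1)
          = valMin d (x r) * (d : ℤ) ^ ((r : ℕ) + (n - 1)) := by
        rw [pow_add]; ring
      rw [this]
      exact Dvd.dvd.mul_left (pow_dvd_pow _ (by omega)) _
    have := dvd_add h1 h2
    have heq : (v : ℤ) * (d : ℤ) ^ (n - 1)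
        - (valMin d (x r0) * (d : ℤ) ^ (n - 1)
          + ∑ r ∈ Finset.univ.erase r0,
              valMin d (x r) * (d : ℤ) ^ (r : ℕ) * (d : ℤ) ^ (n - 1))
        = ((v : ℤ) * (d : ℤ) ^ (n - 1) - valMin d (x r0) * (d : ℤ) ^ (n - 1))
          - ∑ r ∈ Finset.univ.erase r0,
              valMin d (x r) * (d : ℤ) ^ (r : ℕ) * (d : ℤ) ^ (n - 1) := by ring
    have := dvd_sub h1 (dvd_neg.mpr h2)
    rw [heq]
    push_cast
    exact dvd_sub h1 h2
  -- Step 2: unfold and compute both sides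
  simp only [Pi.smul_apply, Matrix.col_apply, op_smul_eq_mul, mul_one, Fmat, FLmat]
  rw [hA]
  have hdC : (d : ℂ) ≠ 0 := Nat.cast_ne_zero.mpr hd0
  have hprod_split :
      (∏ r : Fin n, (1 / (Real.sqrt d : ℂ))
          * ω d (x r * (if (r : ℕ) = 0 then 1 else 0)))
        = (1 / (Real.sqrt d : ℂ)) ^ n
          * ∏ r : Fin n, ω d (x r * (if (r : ℕ) = 0 then 1 else 0)) := by
    rw [Finset.prod_mul_distrib, Finset.prod_const, Finset.card_univ, Fintype.card_fin]
  have homega_one : ω d (0 : ZMod d) = 1 := by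
    rw [ω, ZMod.val_zero]
    simp
  have hprod : (∏ r : Fin n, ω d (x r * (if (r : ℕ) = 0 then 1 else 0))) = ω d (x r0) := by
    rw [Finset.prod_eq_single r0]
    · have : (r0 : ℕ) = 0 := rfl
      simp [this]
    · intro r _ hne
      have hne' : (r : ℕ) ≠ 0 := by
        intro h'
        exact hne (Fin.ext (by simpa [hr0] using h'))
      simp [hne', homega_one]
    · simp
  rw [hprod_split, hprod]
  -- coefficients agree
  have hcoef : (1 / (Real.sqrt (((d ^ n : ℕ) : ℝ)) : ℂ)) = (1 / (Real.sqrt d : ℂ)) ^ n := by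
    have h : (Real.sqrt ((d ^ n : ℕ) : ℝ)) = (Real.sqrt d) ^ n := by
      rw [sqrt_pow_aux]
      norm_cast
    rw [h]
    push_cast
    rw [one_div, one_div, inv_pow]
  rw [hcoef]
  congr 1
  -- ω part
  have hlt : v * d ^ (n - 1) < d ^ n := by
    have hpos : 0 < d ^ (n - 1) := pow_pos (Nat.pos_of_ne_zero hd0) _
    calc v * d ^ (n - 1) < d * d ^ (n - 1) := by
          exact Nat.mul_lt_mul_of_lt_of_le hvlt le_rfl hpos
      _ = d ^ n := by rw [← pow_succ']; congr 1; omega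
  rw [ω, ω, ZMod.val_natCast_of_lt hlt]
  congr 1
  have hdn : ((d : ℂ)) ^ n = (d : ℂ) ^ (n - 1) * d := by
    rw [← pow_succ]; congr 1; omega
  push_cast
  rw [hdn]
  rw [div_eq_div_iff (mul_ne_zero (pow_ne_zero (n - 1) hdC) hdC) hdC]
  ring
end
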